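/- arXiv:2105.01880 — 3 statements merged into one kernel-verified Lean document; each statement's English description precedes it below -/
import Mathlib

section
/- For all n ≥ 0, Hₙ(Bₖ(x)) = Hₙ(Bₖ), where Bₖ(x) are the Bernoulli polynomials and Bₖ = Bₖ(0) the Bernoulli numbers, and Hₙ denotes the Hankel determinant of order n+1. -/
open Finset Matrix

/-- The Hankel determinant `Hₙ(c) = det (c_{i+j})_{0 ≤ i,j ≤ n}`. -/
def hankel (c : ℕ → ℚ) (n : ℕ) : ℚ :=
  Matrix.det (Matrix.of fun i j : Fin (n + 1) => c (i.1 + j.1))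

lemma eval_bernoulli (p : ℕ) (x : ℚ) :
    (Polynomial.bernoulli p).eval x
      = ∑ m ∈ Finset.range (p + 1), bernoulli m * (p.choose m : ℚ) * x ^ (p - m) := by
  simp [Polynomial.bernoulli, Polynomial.eval_finset_sum]

lemma key (x : ℚ) (i j N : ℕ) (hi' : i < N) (hj' : j < N) :
    ∑ k ∈ range N, ∑ l ∈ range N,
      ((i.choose k : ℚ) * x ^ (i - k)) * bernoulli (k + l) * ((j.choose l : ℚ) * x ^ (j - l))
      = (Polynomial.bernoulli (i + j)).eval x := by
  have hi : i + 1 ≤ N := hi'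
  have hj : j + 1 ≤ N := hj'
  set G : ℕ × ℕ → ℚ := fun p =>
    (i.choose p.1 : ℚ) * (j.choose p.2 : ℚ) * bernoulli (p.1 + p.2) * x ^ (i + j - (p.1 + p.2))
    with hG
  rw [eval_bernoulli]
  -- reduce LHS to sum over range (i+1) × range (j+1)
  have h1 : ∑ k ∈ range N, ∑ l ∈ range N,
      ((i.choose k : ℚ) * x ^ (i - k)) * bernoulli (k + l) * ((j.choose l : ℚ) * x ^ (j - l))
      = ∑ p ∈ range (i+1) ×ˢ range (j+1), G p := by
    rw [Finset.sum_product]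
    refine ((Finset.sum_subset (Finset.range_subset_range.2 hi) ?_).symm).trans ?_
    · intro k _ hk
      rw [Nat.choose_eq_zero_of_lt (by simpa using hk)]
      simp
    · refine Finset.sum_congr rfl fun k hk => ?_
      refine ((Finset.sum_subset (Finset.range_subset_range.2 hj) ?_).symm).trans ?_
      · intro l _ hl
        rw [Nat.choose_eq_zero_of_lt (show j < l by simpa using hl)]
        simp
      · refine Finset.sum_congr rfl fun l hl => ?_
        simp only [Finset.mem_range] at hk hl
        have : i + j - (k + l) = (i - k) + (j - l) := by omega
        rw [hG]; dsimp only; rw [this, pow_add]; ring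
  rw [h1]
  -- RHS: expand Vandermonde
  have h2 : ∀ m ∈ range (i + j + 1),
      bernoulli m * ((i+j).choose m : ℚ) * x ^ (i + j - m)
      = ∑ p ∈ Finset.HasAntidiagonal.antidiagonal m, G p := by
    intro m _
    rw [Nat.add_choose_eq i j m]
    push_cast
    rw [Finset.mul_sum, Finset.sum_mul]
    refine Finset.sum_congr rfl fun p hp => ?_
    rw [Finset.HasAntidiagonal.mem_antidiagonal] at hp
    rw [hG]; dsimp only; rw [hp]; ring
  rw [Finset.sum_congr rfl h2]
  have hdisj : (↑(range (i + j + 1)) : Set ℕ).PairwiseDisjoint Finset.HasAntidiagonal.antidiagonal := by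
    intro a _ b _ hab
    simp only [Function.onFun]
    rw [Finset.disjoint_left]
    intro p hpa hpb
    rw [Finset.HasAntidiagonal.mem_antidiagonal] at hpa hpb
    exact hab (hpa ▸ hpb ▸ rfl)
  rw [← Finset.sum_biUnion hdisj]
  refine Finset.sum_subset ?_ ?_
  · intro p hp
    simp only [Finset.mem_product, Finset.mem_range] at hp
    refine Finset.mem_biUnion.2 ⟨p.1 + p.2, Finset.mem_range.2 (by omega), ?_⟩
    exact Finset.HasAntidiagonal.mem_antidiagonal.2 rfl
  · intro p _ hp
    simp only [Finset.mem_product, Finset.mem_range, not_and_or, not_lt] at hp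
    rcases hp with h | h
    · rw [hG]; dsimp only; rw [Nat.choose_eq_zero_of_lt (by omega)]; simp
    · rw [hG]; dsimp only; rw [Nat.choose_eq_zero_of_lt (show j < p.2 by omega)]; simp

theorem hankel_bernoulliPoly (x : ℚ) (n : ℕ) :
    hankel (fun k => (Polynomial.bernoulli k).eval x) n = hankel (fun k => bernoulli k) n := by
  classical
  set A : Matrix (Fin (n+1)) (Fin (n+1)) ℚ :=
    Matrix.of fun i j : Fin (n+1) => (i.1.choose j.1 : ℚ) * x ^ (i.1 - j.1) with hA
  set B : Matrix (Fin (n+1)) (Fin (n+1)) ℚ :=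
    Matrix.of fun i j : Fin (n+1) => (bernoulli (i.1 + j.1) : ℚ) with hB
  have hmat : (Matrix.of fun i j : Fin (n+1) => (Polynomial.bernoulli (i.1 + j.1)).eval x)
      = A * B * Aᵀ := by
    ext i j
    simp only [Matrix.mul_apply, Matrix.transpose_apply, hA, hB, Matrix.of_apply,
      Finset.sum_mul]
    rw [Finset.sum_comm]
    rw [← key x i.1 j.1 (n+1) i.isLt j.isLt]
    rw [← Fin.sum_univ_eq_sum_range (fun k => ∑ l ∈ range (n+1),
      ((i.1.choose k : ℚ) * x ^ (i.1 - k)) * bernoulli (k + l) * ((j.1.choose l : ℚ) * x ^ (j.1 - l)))]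
    refine Finset.sum_congr rfl fun k _ => ?_
    rw [← Fin.sum_univ_eq_sum_range]
  have hdetA : A.det = 1 := by
    have ht : A.BlockTriangular OrderDual.toDual := by
      intro i j hij
      simp only [hA, Matrix.of_apply]
      rw [Nat.choose_eq_zero_of_lt (show i.1 < j.1 from hij)]
      simp
    rw [Matrix.det_of_lowerTriangular A ht]
    simp [hA]
  unfold hankel
  have heq : (Matrix.of fun i j : Fin (n + 1) =>
      (fun k => (Polynomial.bernoulli k).eval x) (i.1 + j.1)) = A * B * Aᵀ := hmat
  rw [heq, Matrix.det_mul, Matrix.det_mul, Matrix.det_transpose, hdetA]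
  simp [hB]
end

section
/- For all n ≥ 0, the Hankel determinant of the Bernoulli numbers satisfies Hₙ(Bₖ) = (−1)^{n(n+1)/2} · ∏_{ℓ=1}^n ( ℓ⁴ / (4(2ℓ+1)(2ℓ−1)) )^{n+1−ℓ}. -/
set_option linter.dupNamespace false


noncomputable section
namespace HB
open Polynomial Finset

/-- recurrence coefficients -/
def lam2 (ℓ : ℕ) : ℚ := -(ℓ:ℚ)^4 / ((2*(ℓ:ℚ)+1)*(2*(ℓ:ℚ)-1))

lemma lam2_zero : lam2 0 = 0 := by simp [lam2]

/-- moments: `mu k = 2^k * B_k(1/2)` -/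
def mu (k : ℕ) : ℚ := 2^k * (Polynomial.bernoulli k).eval (1/2)

lemma mu_zero : mu 0 = 1 := by simp [mu]

/-- generic moment functional -/
def Fl (w : ℕ → ℚ) (p : ℚ[X]) : ℚ := p.sum fun k c => c * w k

lemma Fl_add (w) (p q : ℚ[X]) : Fl w (p + q) = Fl w p + Fl w q :=
  Polynomial.sum_add_index p q _ (fun i => by simp) (fun a b c => by ring)

lemma Fl_monomial (w) (n : ℕ) (a : ℚ) : Fl w (monomial n a) = a * w n :=
  Polynomial.sum_monomial_index a (fun k c => c * w k) (zero_mul _)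

lemma Fl_zero (w) : Fl w 0 = 0 := by simp [Fl]

lemma Fl_smul (w) (a : ℚ) (p : ℚ[X]) : Fl w (a • p) = a * Fl w p := by
  unfold Fl
  rw [Polynomial.sum_smul_index p a _ (fun i => by simp), Polynomial.sum_def,
    Polynomial.sum_def, Finset.mul_sum]
  exact Finset.sum_congr rfl (fun k _ => by ring)

lemma Fl_C_mul (w) (a : ℚ) (p : ℚ[X]) : Fl w (C a * p) = a * Fl w p := by
  rw [← smul_eq_C_mul, Fl_smul]

lemma Fl_neg (w) (p : ℚ[X]) : Fl w (-p) = - Fl w p := by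
  have := Fl_C_mul w (-1) p; simpa using this

lemma Fl_sub (w) (p q : ℚ[X]) : Fl w (p - q) = Fl w p - Fl w q := by
  rw [sub_eq_add_neg, Fl_add, Fl_neg]; ring

lemma Fl_sum (w) {α : Type*} (s : Finset α) (f : α → ℚ[X]) :
    Fl w (∑ i ∈ s, f i) = ∑ i ∈ s, Fl w (f i) := by
  classical
  induction s using Finset.induction_on with
  | empty => simp [Fl_zero]
  | @insert a s' h ih => rw [Finset.sum_insert h, Fl_add, ih, Finset.sum_insert h]

lemma Fl_X_pow (w) (k : ℕ) : Fl w (X ^ k) = w k := by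
  rw [← Polynomial.monomial_one_right_eq_X_pow, Fl_monomial, one_mul]

lemma Fl_one (w) : Fl w 1 = w 0 := by
  have := Fl_X_pow w 0; simpa using this

/-- the Bernoulli-moment functional in the rescaled variable -/
def L : ℚ[X] → ℚ := Fl mu

lemma L_def (p : ℚ[X]) : L p = Fl mu p := rfl

/-- `∑_{k ≤ n} C(n,k) Bpoly_k(x) = Bpoly_n(x) + n x^(n-1)`. -/
lemma sum_bern_eval (n : ℕ) (x : ℚ) :
    ∑ k ∈ range (n+1), (n.choose k : ℚ) * (Polynomial.bernoulli k).eval x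
      = (Polynomial.bernoulli n).eval x + n * x ^ (n-1) := by
  rcases n with _ | m
  · simp
  · have h := congrArg (Polynomial.eval x) (Polynomial.sum_bernoulli m)
    simp only [Polynomial.eval_finset_sum, Polynomial.eval_smul, smul_eq_mul,
      Polynomial.eval_monomial] at h
    rw [Finset.sum_range_succ, h, Nat.choose_self, Nat.add_sub_cancel]
    push_cast
    ring

/-- The key shift identity for the moment functional. -/
lemma L_comp (p : ℚ[X]) :
    L (p.comp (X + C 2)) = L p + 2 * p.derivative.eval 1 := by
  simp only [L_def]
  induction p using Polynomial.induction_on' with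
  | add p q hp hq =>
    simp only [add_comp, derivative_add, eval_add, Fl_add]
    rw [hp, hq]; ring
  | monomial n a =>
    rw [monomial_comp, ← smul_eq_C_mul, Fl_smul]
    have hdeg : ((X + C 2 : ℚ[X]) ^ n).natDegree < n + 1 := by
      apply Nat.lt_succ_of_le
      calc ((X + C 2 : ℚ[X]) ^ n).natDegree ≤ n * (X + C 2 : ℚ[X]).natDegree :=
            natDegree_pow_le
        _ ≤ n * 1 := Nat.mul_le_mul_left n (le_of_eq (natDegree_X_add_C (2:ℚ)))
        _ = n := by ring
    have h1 : Fl mu ((X + C 2 : ℚ[X]) ^ n)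
        = ∑ k ∈ range (n+1), (2:ℚ)^(n-k) * (n.choose k : ℚ) * mu k := by
      unfold Fl
      rw [Polynomial.sum_over_range' ((X + C 2:ℚ[X])^n)
        (f := fun k c => c * mu k) (fun k => zero_mul _) (n+1) hdeg]
      exact Finset.sum_congr rfl (fun k _ => by rw [coeff_X_add_C_pow])
    have h2 : ∑ k ∈ range (n+1), (2:ℚ)^(n-k) * (n.choose k : ℚ) * mu k
        = mu n + 2 * n := by
      have e1 : ∀ k ∈ range (n+1), (2:ℚ)^(n-k) * (n.choose k : ℚ) * mu k
          = 2^n * ((n.choose k : ℚ) * (Polynomial.bernoulli k).eval (1/2)) := by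
        intro k hk
        rw [Finset.mem_range, Nat.lt_succ_iff] at hk
        rw [mu, show (2:ℚ)^n = 2^(n-k) * 2^k by rw [← pow_add]; congr 1; omega]
        ring
      rw [Finset.sum_congr rfl e1, ← Finset.mul_sum, sum_bern_eval, mu]
      have : (2:ℚ)^n * ((n:ℚ) * (1/2)^(n-1)) = 2 * n := by
        rcases n with _ | m
        · simp
        · rw [Nat.add_sub_cancel, show m + 1 = (m ) + 1 from rfl, pow_succ]
          rw [show ((1:ℚ)/2)^m = ((2:ℚ)^m)⁻¹ by rw [one_div, inv_pow]]
          field_simp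
      rw [mul_add, this]
    rw [h1, h2, derivative_monomial, eval_monomial, Fl_monomial, one_pow]
    ring

open Polynomial Finset

/-- the (monic, rescaled) orthogonal polynomials -/
def P : ℕ → ℚ[X]
  | 0 => 1
  | 1 => X
  | (n+2) => X * P (n+1) - C (lam2 (n+1)) * P n

lemma P_succ_succ (n : ℕ) : P (n+2) = X * P (n+1) - C (lam2 (n+1)) * P n := rfl

/-- three-term recurrence, valid for all `n` -/
lemma rec' (n : ℕ) : X * P n = P (n+1) + C (lam2 n) * P (n-1) := by
  cases n with
  | zero => simp [P, lam2_zero]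
  | succ m => rw [P_succ_succ]; simp

/-- second-order difference operator -/
def T (p : ℚ[X]) : ℚ[X] :=
  (X+1)^2 * p.comp (X + C 2) + (X-1)^2 * p.comp (X - C 2) - ((X+1)^2 + (X-1)^2) * p

def S (p : ℚ[X]) : ℚ[X] :=
  (X+1)^2 * p.comp (X + C 2) - (X-1)^2 * p.comp (X - C 2)

lemma T_sub (p q : ℚ[X]) : T (p - q) = T p - T q := by
  unfold T; simp only [sub_comp, mul_comp, X_comp, C_comp, map_ofNat]; ring

lemma T_C_mul (a : ℚ) (p : ℚ[X]) : T (C a * p) = C a * T p := by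
  unfold T; simp only [mul_comp, C_comp]; ring

lemma S_sub (p q : ℚ[X]) : S (p - q) = S p - S q := by
  unfold S; simp only [sub_comp, mul_comp, X_comp, C_comp, map_ofNat]; ring

lemma S_C_mul (a : ℚ) (p : ℚ[X]) : S (C a * p) = C a * S p := by
  unfold S; simp only [mul_comp, C_comp]; ring

lemma T_X_mul (q : ℚ[X]) : T (X * q) = X * T q + 2 * S q := by
  unfold T S; simp only [mul_comp, X_comp, C_comp, map_ofNat]; ring

lemma S_X_mul (q : ℚ[X]) : S (X * q) = X * S q + 2 * T q + 2*((X+1)^2 + (X-1)^2) * q := by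
  unfold T S; simp only [mul_comp, X_comp, C_comp, map_ofNat]; ring

/-- self-adjointness of `T` w.r.t. `L` -/
lemma sadj (q r : ℚ[X]) : L (T q * r) = L (q * T r) := by
  have hcomp : ∀ p : ℚ[X], (p.comp (X - C 2)).comp (X + C 2) = p := by
    intro p
    rw [comp_assoc, sub_comp, X_comp, C_comp]
    simp
  set G : ℚ[X] := (X-1)^2 * (q * r.comp (X - C 2) - q.comp (X - C 2) * r) with hG
  have hsq : ((X - 1 : ℚ[X])^2).comp (X + C 2) = (X+1)^2 := by
    rw [pow_comp, sub_comp, X_comp, one_comp, map_ofNat]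
    ring
  have hGc : G.comp (X + C 2)
      = (X+1)^2 * (q.comp (X + C 2) * r - q * r.comp (X + C 2)) := by
    rw [hG, mul_comp, hsq, sub_comp, mul_comp, mul_comp, hcomp, hcomp]
  have hid : T q * r - q * T r = G.comp (X + C 2) - G := by
    rw [hGc, hG]
    unfold T
    ring
  have h3 : L (T q * r) - L (q * T r) = L (G.comp (X + C 2)) - L G := by
    rw [L_def, L_def, L_def, L_def, ← Fl_sub, ← Fl_sub, ← L_def, ← L_def, hid]
  have h4 : G.derivative.eval 1 = 0 := by
    rw [hG, derivative_mul]
    simp [derivative_pow]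
  rw [L_comp, h4] at h3
  linarith

lemma lam2_id (n : ℕ) :
    8*((n:ℚ)+1)^2 + 8*((n:ℚ)+1) + 4 + (8*(n:ℚ)+20) * lam2 (n+2) - (8*(n:ℚ)+4) * lam2 (n+1) = 0 := by
  unfold lam2
  push_cast
  have h1 : (2*((n:ℚ)+2)+1) ≠ 0 := by positivity
  have h2 : (2*((n:ℚ)+2)-1) ≠ 0 := by nlinarith [sq_nonneg ((n:ℚ))]
  have h3 : (2*((n:ℚ)+1)+1) ≠ 0 := by positivity
  have h4 : (2*((n:ℚ)+1)-1) ≠ 0 := by nlinarith [sq_nonneg ((n:ℚ))]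
  have h5 : (1 + (n:ℚ)*2) ≠ 0 := by positivity
  have h6 : (2*(n:ℚ)+1) ≠ 0 := by positivity
  have h7 : (2*(n:ℚ)+3) ≠ 0 := by positivity
  rw [show (2*((n:ℚ)+1)-1) = 2*(n:ℚ)+1 by ring, show (2*((n:ℚ)+2)-1) = 2*(n:ℚ)+3 by ring]
  field_simp
  ring

/-- joint eigenfunction statement -/
def J (n : ℕ) : Prop :=
  T (P n) = C (4*(n:ℚ)^2 + 4*n) * P n ∧
  S (P n) = C (4*(n:ℚ) + 4) * (X * P n) - C ((8*(n:ℚ)+4) * lam2 n) * P (n-1)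

lemma J0 : J 0 := by
  constructor
  · show T (P 0) = _
    rw [show P 0 = 1 from rfl, show (4*((0:ℕ):ℚ)^2 + 4*((0:ℕ):ℚ)) = 0 by norm_num, C_0]
    unfold T
    simp only [one_comp]
    ring
  · show S (P 0) = _
    rw [show P 0 = 1 from rfl, lam2_zero, mul_zero, C_0,
      show (4*((0:ℕ):ℚ) + 4) = 4 by norm_num, map_ofNat]
    unfold S
    simp only [one_comp]
    ring

lemma J1 : J 1 := by
  constructor
  · show T (P 1) = _
    rw [show P 1 = X from rfl, show (4*((1:ℕ):ℚ)^2 + 4*((1:ℕ):ℚ)) = 8 by norm_num, map_ofNat]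
    unfold T
    simp only [X_comp, map_ofNat]
    ring
  · show S (P 1) = _
    rw [show P 1 = X from rfl, show (1:ℕ) - 1 = 0 from rfl, show P 0 = 1 from rfl,
      show ((8*((1:ℕ):ℚ)+4) * lam2 1) = -4 by norm_num [lam2],
      show (4*((1:ℕ):ℚ) + 4) = 8 by norm_num, map_ofNat,
      show C (-4:ℚ) = -(4:ℚ[X]) by rw [map_neg, map_ofNat]]
    unfold S
    simp only [X_comp, map_ofNat]
    ring

lemma Jstep (n : ℕ) (hn : J n) (hn1 : J (n+1)) : J (n+2) := by
  obtain ⟨hA0, hB0⟩ := hn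
  obtain ⟨hA1, hB1⟩ := hn1
  simp only [Nat.add_sub_cancel] at hB1
  have hrec := rec' n
  have hT2 : T (P (n+2)) = X * T (P (n+1)) + 2 * S (P (n+1)) - C (lam2 (n+1)) * T (P n) := by
    rw [P_succ_succ, T_sub, T_C_mul, T_X_mul]
  have hS2 : S (P (n+2)) = X * S (P (n+1)) + 2 * T (P (n+1))
      + 2*((X+1)^2 + (X-1)^2) * P (n+1) - C (lam2 (n+1)) * S (P n) := by
    rw [P_succ_succ, S_sub, S_C_mul, S_X_mul]
  have hC := congrArg C (lam2_id n)
  push_cast at hC hB0 hA0 hB1 hA1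
  simp only [map_add, map_sub, map_mul, map_ofNat, C_0, C_1, map_pow, map_natCast] at hC hB0 hA0 hB1 hA1
  constructor
  · show T (P (n+2)) = _
    rw [hT2, hA1, hA0, hB1, P_succ_succ]
    push_cast
    simp only [map_add, map_sub, map_mul, map_ofNat, C_0, C_1, map_pow, map_natCast]
    ring
  · show S (P (n+2)) = C (4*((n+2:ℕ):ℚ) + 4) * (X * P (n+2))
        - C ((8*((n+2:ℕ):ℚ)+4) * lam2 (n+2)) * P (n+1)
    rw [hS2, hA1, hB1, hB0, P_succ_succ]
    push_cast
    simp only [map_add, map_sub, map_mul, map_ofNat, C_0, C_1, map_pow, map_natCast]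
    linear_combination (-((8*(n:ℚ[X])+4) * C (lam2 (n+1)))) * hrec + P (n+1) * hC

lemma JAll (n : ℕ) : J n := by
  suffices h : J n ∧ J (n+1) from h.1
  induction n with
  | zero => exact ⟨J0, J1⟩
  | succ m ih => exact ⟨ih.2, Jstep m ih.1 ih.2⟩

lemma ortho {i j : ℕ} (h : i ≠ j) : L (P i * P j) = 0 := by
  have hi := (JAll i).1
  have hj := (JAll j).1
  have h1 : (4*(i:ℚ)^2+4*i) * L (P i * P j) = (4*(j:ℚ)^2+4*j) * L (P i * P j) := by
    calc (4*(i:ℚ)^2+4*i) * L (P i * P j)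
        = L (C (4*(i:ℚ)^2+4*i) * (P i * P j)) := (Fl_C_mul mu _ _).symm
      _ = L (T (P i) * P j) := congrArg L (by rw [hi]; ring)
      _ = L (P i * T (P j)) := sadj _ _
      _ = L (C (4*(j:ℚ)^2+4*j) * (P i * P j)) := congrArg L (by rw [hj]; ring)
      _ = (4*(j:ℚ)^2+4*j) * L (P i * P j) := Fl_C_mul mu _ _
  have h2 : (4*(i:ℚ)^2+4*i) ≠ (4*(j:ℚ)^2+4*j) := by
    rcases h.lt_or_gt with hij | hij
    · have hc : (i:ℚ) < j := by exact_mod_cast hij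
      have h0 : (0:ℚ) ≤ i := Nat.cast_nonneg i
      nlinarith
    · have hc : (j:ℚ) < i := by exact_mod_cast hij
      have h0 : (0:ℚ) ≤ j := Nat.cast_nonneg j
      nlinarith
  by_contra hne
  exact h2 (mul_right_cancel₀ hne h1)

/-- squared norms -/
def hseq (k : ℕ) : ℚ := ∏ ℓ ∈ Icc 1 k, lam2 ℓ

lemma Lnorm : ∀ k, L (P k * P k) = hseq k := by
  intro k
  induction k with
  | zero =>
    show L (P 0 * P 0) = _
    rw [show P 0 = 1 from rfl, mul_one, show L 1 = mu 0 from Fl_one mu, mu_zero]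
    simp [hseq]
  | succ k ih =>
    have hP1 : P (k+1) = X * P k - C (lam2 k) * P (k-1) := by linear_combination -rec' k
    have hrec1 : X * P (k+1) = P (k+2) + C (lam2 (k+1)) * P k := rec' (k+1)
    have e1 : P (k+1) * P (k+1)
        = P (k+2) * P k + C (lam2 (k+1)) * (P k * P k)
          - C (lam2 k) * (P (k+1) * P (k-1)) := by
      linear_combination P (k+1) * hP1 + P k * hrec1
    rw [congrArg L e1, L_def, Fl_sub, Fl_add, Fl_C_mul, Fl_C_mul,
      ← L_def, ← L_def, ← L_def, ortho (by omega : k+2 ≠ k),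
      ortho (by omega : k+1 ≠ k-1), ih]
    show 0 + lam2 (k+1) * hseq k - lam2 k * 0 = hseq (k+1)
    simp only [hseq]
    rw [Finset.prod_Icc_succ_top (by omega : 1 ≤ k+1)]
    ring


lemma Pmonic : ∀ n, (P n).Monic ∧ (P n).natDegree = n := by
  intro n
  induction n using Nat.strong_induction_on with
  | _ n ih =>
    match n with
    | 0 => exact ⟨monic_one, natDegree_one⟩
    | 1 => exact ⟨monic_X, natDegree_X⟩
    | (m+2) =>
      obtain ⟨h1m, h1d⟩ := ih (m+1) (by omega)
      obtain ⟨h0m, h0d⟩ := ih m (by omega)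
      have hm : (X * P (m+1)).Monic := monic_X.mul h1m
      have hd : (X * P (m+1)).natDegree = m + 2 := by
        rw [monic_X.natDegree_mul h1m, natDegree_X, h1d]
        omega
      have hdeg2 : (C (lam2 (m+1)) * P m).degree < (X * P (m+1)).degree := by
        apply lt_of_le_of_lt (degree_mul_le _ _)
        have e1 : (C (lam2 (m+1))).degree ≤ 0 := degree_C_le
        have e2 : (P m).degree ≤ m := by
          rw [degree_eq_natDegree h0m.ne_zero, h0d]
        have e3 : (X * P (m+1)).degree = ((m+2 : ℕ) : WithBot ℕ) := by
          rw [degree_eq_natDegree hm.ne_zero, hd]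
        rw [e3]
        calc (C (lam2 (m+1))).degree + (P m).degree ≤ 0 + (m : WithBot ℕ) :=
              add_le_add e1 e2
          _ = (m : WithBot ℕ) := zero_add _
          _ < ((m+2 : ℕ) : WithBot ℕ) := by
              exact_mod_cast (by omega : m < m + 2)
      constructor
      · rw [P_succ_succ, sub_eq_add_neg]
        exact hm.add_of_left (by rwa [degree_neg])
      · rw [P_succ_succ]
        rw [natDegree_sub_eq_left_of_natDegree_lt, hd]
        apply lt_of_le_of_lt (natDegree_mul_le)
        rw [natDegree_C, hd, h0d]
        omega

lemma P_coeff_self (n : ℕ) : (P n).coeff n = 1 := by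
  have h := Pmonic n
  have := h.1
  rw [Polynomial.Monic, Polynomial.leadingCoeff, h.2] at this
  exact this

lemma P_coeff_zero {n k : ℕ} (h : n < k) : (P n).coeff k = 0 := by
  apply coeff_eq_zero_of_natDegree_lt
  rw [(Pmonic n).2]
  exact h

/-- expansion of `(2X+1)^m` -/
lemma twoX_pow (m : ℕ) :
    (2*X+1 : ℚ[X])^m = ∑ k ∈ range (m+1), C ((m.choose k : ℚ) * 2^k) * X^k := by
  rw [add_pow]
  refine Finset.sum_congr rfl fun k hk => ?_
  rw [one_pow, mul_one, mul_pow]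
  simp only [map_mul, map_pow, map_natCast, map_ofNat]
  ring

lemma coeff_twoX (m k : ℕ) : ((2*X+1 : ℚ[X])^m).coeff k = (m.choose k : ℚ) * 2^k := by
  rw [twoX_pow, finset_sum_coeff]
  simp only [coeff_C_mul, coeff_X_pow]
  rcases le_or_gt k m with h | h
  · rw [Finset.sum_eq_single k]
    · simp
    · intro b _ hb; simp [Ne.symm hb]
    · intro hk; exact absurd (Finset.mem_range.2 (by omega)) hk
  · rw [Finset.sum_eq_zero, Nat.choose_eq_zero_of_lt h]
    · simp
    · intro b hb
      rw [Finset.mem_range] at hb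
      simp [show k ≠ b by omega]

/-- product formula for the functional -/
lemma Fl_mul_eq (w : ℕ → ℚ) (p q : ℚ[X]) (N : ℕ) (hp : p.natDegree < N) (hq : q.natDegree < N) :
    Fl w (p * q) = ∑ k ∈ range N, ∑ l ∈ range N, p.coeff k * q.coeff l * w (k + l) := by
  conv_lhs => rw [p.as_sum_range' N hp, q.as_sum_range' N hq]
  rw [Finset.sum_mul_sum, Fl_sum]
  refine Finset.sum_congr rfl fun k _ => ?_
  rw [Fl_sum]
  refine Finset.sum_congr rfl fun l _ => ?_
  rw [monomial_mul_monomial, Fl_monomial]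

/-- `mu` in terms of Bernoulli numbers -/
lemma mu_sum (m : ℕ) :
    mu m = ∑ s ∈ range (m+1), (m.choose s : ℚ) * 2^s * _root_.bernoulli s := by
  rw [mu, Polynomial.bernoulli_def, Polynomial.eval_finset_sum, Finset.mul_sum,
    ← Finset.sum_range_reflect (fun s => (m.choose s : ℚ) * 2^s * _root_.bernoulli s) (m+1)]
  refine Finset.sum_congr rfl fun i hi => ?_
  rw [Finset.mem_range] at hi
  rw [Polynomial.eval_monomial, show m+1-1-i = m-i by omega,
    Nat.choose_symm (by omega : i ≤ m),
    show ((1:ℚ)/2)^i = ((2:ℚ)^i)⁻¹ by rw [one_div, inv_pow],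
    show (2:ℚ)^m = 2^(m-i) * 2^i by rw [← pow_add]; congr 1; omega]
  have h2 : ((2:ℚ)^i) ≠ 0 := by positivity
  field_simp

/-- value of the Bernoulli functional on powers of `2X+1` -/
lemma FlB_twoX (m : ℕ) :
    Fl (fun k => _root_.bernoulli k) ((2*X+1 : ℚ[X])^m) = mu m := by
  rw [twoX_pow, Fl_sum, mu_sum]
  refine Finset.sum_congr rfl fun k _ => ?_
  rw [← smul_eq_C_mul, Fl_smul, Fl_X_pow]


def Bmat (n : ℕ) : Matrix (Fin (n+1)) (Fin (n+1)) ℚ :=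
  Matrix.of fun i j => _root_.bernoulli (i.1 + j.1)

def Vmat (n : ℕ) : Matrix (Fin (n+1)) (Fin (n+1)) ℚ :=
  Matrix.of fun i j => ((2*X+1 : ℚ[X])^(i.1 : ℕ)).coeff j.1

def Mmat (n : ℕ) : Matrix (Fin (n+1)) (Fin (n+1)) ℚ :=
  Matrix.of fun i j => mu (i.1 + j.1)

def Cmat (n : ℕ) : Matrix (Fin (n+1)) (Fin (n+1)) ℚ :=
  Matrix.of fun i j => (P i.1).coeff j.1

lemma twoX_deg (m : ℕ) : ((2*X+1 : ℚ[X])^m).natDegree ≤ m := by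
  rw [Polynomial.natDegree_le_iff_coeff_eq_zero]
  intro k hk
  rw [coeff_twoX, Nat.choose_eq_zero_of_lt hk]
  simp

lemma VBV (n : ℕ) : Vmat n * Bmat n * (Vmat n).transpose = Mmat n := by
  ext i j
  simp only [Matrix.mul_apply, Matrix.transpose_apply, Vmat, Bmat, Mmat, Matrix.of_apply]
  have hmul := Fl_mul_eq (fun k => _root_.bernoulli k)
    ((2*X+1 : ℚ[X])^(i.1 : ℕ)) ((2*X+1 : ℚ[X])^(j.1 : ℕ)) (n+1)
    (lt_of_le_of_lt (twoX_deg _) (by omega : (i.1:ℕ) < n+1))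
    (lt_of_le_of_lt (twoX_deg _) (by omega : (j.1:ℕ) < n+1))
  rw [← pow_add, FlB_twoX] at hmul
  rw [hmul, Finset.sum_comm]
  rw [Fin.sum_univ_eq_sum_range
    (fun x => (∑ y : Fin (n+1), ((2*X+1:ℚ[X])^(i.1:ℕ)).coeff y.1
        * _root_.bernoulli (y.1 + x)) * ((2*X+1:ℚ[X])^(j.1:ℕ)).coeff x) (n+1)]
  refine Finset.sum_congr rfl fun k _ => ?_
  rw [Fin.sum_univ_eq_sum_range
    (fun y => ((2*X+1:ℚ[X])^(i.1:ℕ)).coeff y * _root_.bernoulli (y + k)) (n+1),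
    Finset.sum_mul]
  refine Finset.sum_congr rfl fun l _ => ?_
  ring

lemma CMC (n : ℕ) : Cmat n * Mmat n * (Cmat n).transpose
    = Matrix.diagonal (fun i : Fin (n+1) => hseq i.1) := by
  ext i j
  simp only [Matrix.mul_apply, Matrix.transpose_apply, Cmat, Mmat, Matrix.of_apply,
    Matrix.diagonal_apply]
  have hmul := Fl_mul_eq mu (P i.1) (P j.1) (n+1)
    (by rw [(Pmonic _).2]; omega) (by rw [(Pmonic _).2]; omega)
  have hLval : Fl mu (P i.1 * P j.1) = if i = j then hseq i.1 else 0 := by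
    by_cases hij : i = j
    · subst hij
      simp only [if_pos rfl]
      exact Lnorm i.1
    · rw [if_neg hij]
      exact ortho (fun hc => hij (Fin.ext hc))
  rw [← hLval, hmul, Finset.sum_comm]
  rw [Fin.sum_univ_eq_sum_range
    (fun x => (∑ y : Fin (n+1), (P (i.1:ℕ)).coeff y.1 * mu (y.1 + x)) * (P (j.1:ℕ)).coeff x)
    (n+1)]
  refine Finset.sum_congr rfl fun k _ => ?_
  rw [Fin.sum_univ_eq_sum_range
    (fun y => (P (i.1:ℕ)).coeff y * mu (y + k)) (n+1), Finset.sum_mul]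
  refine Finset.sum_congr rfl fun l _ => ?_
  ring

lemma detC (n : ℕ) : (Cmat n).det = 1 := by
  rw [Matrix.det_of_lowerTriangular (Cmat n)
    (fun i j h => P_coeff_zero (by exact_mod_cast h))]
  · rw [Finset.prod_eq_one]
    intro i _
    exact P_coeff_self i.1

lemma detV (n : ℕ) : (Vmat n).det = ∏ i : Fin (n+1), (2:ℚ)^(i.1:ℕ) := by
  rw [Matrix.det_of_lowerTriangular (Vmat n)
    (fun i j h => by
      show ((2*X+1:ℚ[X])^(i.1:ℕ)).coeff j.1 = 0
      rw [coeff_twoX, Nat.choose_eq_zero_of_lt (by exact_mod_cast h)]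
      simp)]
  refine Finset.prod_congr rfl fun i _ => ?_
  show ((2*X+1:ℚ[X])^(i.1:ℕ)).coeff i.1 = 2^(i.1:ℕ)
  rw [coeff_twoX, Nat.choose_self]
  simp



lemma gauss (n : ℕ) : ∑ i ∈ range (n+1), i = n*(n+1)/2 := by
  have h : (∑ i ∈ range (n+1), i) * 2 = n*(n+1) := by
    rw [Finset.sum_range_id_mul_two (n+1), Nat.add_sub_cancel, Nat.mul_comm]
  omega

lemma esum (n : ℕ) : ∑ ℓ ∈ Icc 1 n, (n+1-ℓ) = n*(n+1)/2 := by
  induction n with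
  | zero => simp
  | succ n ih =>
    rw [Finset.sum_Icc_succ_top (by omega : 1 ≤ n+1)]
    have h1 : ∑ ℓ ∈ Icc 1 n, (n+1+1-ℓ) = (∑ ℓ ∈ Icc 1 n, (n+1-ℓ)) + n := by
      rw [Finset.sum_congr rfl (fun ℓ hℓ => by
        rw [Finset.mem_Icc] at hℓ
        omega : ∀ ℓ ∈ Icc 1 n, n+1+1-ℓ = (n+1-ℓ) + 1)]
      rw [Finset.sum_add_distrib]
      simp [Nat.card_Icc]
    rw [h1, ih]
    have e : (n+1)*(n+1+1) = n*(n+1) + 2*(n+1) := by ring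
    omega

lemma prodid (n : ℕ) :
    ∏ i ∈ range (n+1), hseq i = ∏ ℓ ∈ Icc 1 n, lam2 ℓ ^ (n+1-ℓ) := by
  induction n with
  | zero => simp [hseq]
  | succ n ih =>
    rw [Finset.prod_range_succ, ih, show hseq (n+1) = ∏ ℓ ∈ Icc 1 (n+1), lam2 ℓ from rfl]
    rw [Finset.prod_Icc_succ_top (by omega : 1 ≤ n+1),
      Finset.prod_Icc_succ_top (by omega : 1 ≤ n+1),
      show n+1+1-(n+1) = 1 by omega, pow_one]
    have key : (∏ ℓ ∈ Icc 1 n, lam2 ℓ ^ (n+1-ℓ)) * (∏ ℓ ∈ Icc 1 n, lam2 ℓ)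
        = ∏ ℓ ∈ Icc 1 n, lam2 ℓ ^ (n+1+1-ℓ) := by
      rw [← Finset.prod_mul_distrib]
      exact Finset.prod_congr rfl fun ℓ hℓ => by
        rw [Finset.mem_Icc] at hℓ
        rw [show n+1+1-ℓ = (n+1-ℓ)+1 by omega, pow_succ]
    rw [← key]
    ring

theorem main (n : ℕ) :
    (Bmat n).det = (-1) ^ (n * (n + 1) / 2)
      * ∏ ℓ ∈ Finset.Icc 1 n,
          ((ℓ : ℚ) ^ 4 / (4 * (2 * (ℓ : ℚ) + 1) * (2 * (ℓ : ℚ) - 1))) ^ (n + 1 - ℓ) := by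
  set s : ℕ := n*(n+1)/2 with hs
  -- determinant of M two ways
  have h1 : (Mmat n).det = ((2:ℚ)^s)^2 * (Bmat n).det := by
    rw [← VBV n, Matrix.det_mul, Matrix.det_mul, Matrix.det_transpose, detV]
    have : ∏ i : Fin (n+1), (2:ℚ)^(i.1:ℕ) = 2^s := by
      rw [Fin.prod_univ_eq_prod_range (fun i => (2:ℚ)^i) (n+1),
        Finset.prod_pow_eq_pow_sum, gauss]
    rw [this]; ring
  have h2 : (Mmat n).det = ∏ i ∈ range (n+1), hseq i := by
    have := congrArg Matrix.det (CMC n)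
    rw [Matrix.det_mul, Matrix.det_mul, Matrix.det_transpose, detC, Matrix.det_diagonal] at this
    rw [one_mul, mul_one] at this
    rw [this, Fin.prod_univ_eq_prod_range (fun i => hseq i) (n+1)]
  -- rewrite the product of norms
  have h3 : ∏ i ∈ range (n+1), hseq i
      = (-4:ℚ)^s * ∏ ℓ ∈ Icc 1 n,
          ((ℓ : ℚ) ^ 4 / (4 * (2 * (ℓ : ℚ) + 1) * (2 * (ℓ : ℚ) - 1))) ^ (n + 1 - ℓ) := by
    rw [prodid]
    have hsplit : ∀ ℓ ∈ Icc 1 n, lam2 ℓ ^ (n+1-ℓ)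
        = (-4:ℚ)^(n+1-ℓ) * ((ℓ : ℚ) ^ 4 / (4 * (2 * (ℓ : ℚ) + 1) * (2 * (ℓ : ℚ) - 1))) ^ (n+1-ℓ) := by
      intro ℓ hℓ
      rw [Finset.mem_Icc] at hℓ
      rw [← mul_pow]
      congr 1
      rw [lam2]
      have hℓ1 : (1:ℚ) ≤ (ℓ:ℚ) := by exact_mod_cast hℓ.1
      have d1 : (2*(ℓ:ℚ)+1) ≠ 0 := by nlinarith
      have d2 : (2*(ℓ:ℚ)-1) ≠ 0 := by nlinarith
      field_simp
    rw [Finset.prod_congr rfl hsplit, Finset.prod_mul_distrib,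
      Finset.prod_pow_eq_pow_sum, esum]
  -- combine
  have h4 : ((2:ℚ)^s)^2 ≠ 0 := by positivity
  have h5 : ((2:ℚ)^s)^2 * (Bmat n).det
      = ((2:ℚ)^s)^2 * ((-1) ^ s
        * ∏ ℓ ∈ Icc 1 n,
          ((ℓ : ℚ) ^ 4 / (4 * (2 * (ℓ : ℚ) + 1) * (2 * (ℓ : ℚ) - 1))) ^ (n + 1 - ℓ)) := by
    rw [← h1, h2, h3]
    have : (-4:ℚ)^s = ((2:ℚ)^s)^2 * (-1)^s := by
      rw [show (-4:ℚ) = (-1) * 2^2 by norm_num, mul_pow, ← pow_mul, ← pow_mul]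
      ring
    rw [this]; ring
  exact mul_left_cancel₀ h4 h5

end HB

end

theorem hankel_bernoulli (n : ℕ) :
    hankel (fun k => bernoulli k) n
      = (-1) ^ (n * (n + 1) / 2)
      * ∏ ℓ ∈ Finset.Icc 1 n,
          ((ℓ : ℚ) ^ 4 / (4 * (2 * (ℓ : ℚ) + 1) * (2 * (ℓ : ℚ) - 1))) ^ (n + 1 - ℓ) := by
  exact HB.main n
end

section
/- For all n ≥ 0, the Hankel determinant of the sequence Eₖ(1) of Euler polynomial values at 1 satisfies Hₙ(Eₖ(1)) = (−1)^{n(n+1)/2} · ∏_{ℓ=1}^n (ℓ²/4)^{n+1−ℓ}. -/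
/-- Evaluation `Eₙ(x)` of the Euler polynomials, defined by the recurrence
`Eₙ(x) = xⁿ - (1/2) ∑_{k<n} C(n,k) Eₖ(x)`, equivalent to the generating function
`2e^{xt}/(e^t+1) = ∑ Eₙ(x) tⁿ/n!`. -/
def eulerEval (x : ℚ) : ℕ → ℚ :=
  WellFounded.fix Nat.lt_wfRel.wf fun n E =>
    x ^ n - 2⁻¹ * ∑ k : Fin n, (n.choose k : ℚ) * E k k.2

noncomputable section

open Polynomial Finset Matrix

abbrev e (n : ℕ) : ℚ := eulerEval 1 n

lemma eulerEval_def (x : ℚ) (n : ℕ) :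
    eulerEval x n = x ^ n - 2⁻¹ * ∑ k ∈ range n, (n.choose k : ℚ) * eulerEval x k := by
  conv_lhs => rw [eulerEval, WellFounded.fix_eq]
  rw [← Fin.sum_univ_eq_sum_range (fun k => (n.choose k : ℚ) * eulerEval x k) n]
  rfl

lemma euler_dagger (n : ℕ) : ∑ k ∈ range (n+1), (n.choose k : ℚ) * e k = 2 - e n := by
  have h := eulerEval_def 1 n
  simp only [one_pow] at h
  rw [Finset.sum_range_succ, Nat.choose_self]
  have : ∑ k ∈ range n, (n.choose k : ℚ) * e k = 2 * (1 - e n) := by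
    field_simp [e] at h ⊢
    linarith [h]
  rw [this]; push_cast; ring

/-- the Euler moment functional -/
def L : ℚ[X] →ₗ[ℚ] ℚ := Polynomial.lsum (fun k => LinearMap.toSpanSingleton ℚ ℚ (e k))

@[simp] lemma L_monomial (k : ℕ) (a : ℚ) : L (monomial k a) = a * e k := by
  simp [L, Polynomial.lsum_apply, Polynomial.sum_monomial_index, LinearMap.toSpanSingleton_apply,
    smul_eq_mul]

@[simp] lemma L_X_pow (k : ℕ) : L (X ^ k) = e k := by
  rw [← monomial_one_right_eq_X_pow]; simp

@[simp] lemma L_one : L 1 = e 0 := by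
  simpa using L_X_pow 0

/-- the shift property (a) -/
lemma L_shift (p : ℚ[X]) : L (p.comp (X + 1)) = 2 * p.eval 1 - L p := by
  induction p using Polynomial.induction_on' with
  | add p q hp hq => rw [add_comp, map_add, hp, hq, eval_add, map_add]; ring
  | monomial n a =>
    rw [monomial_comp, eval_monomial, L_monomial]
    have h1 : (C a * (X + 1) ^ n : ℚ[X]) = a • ((X+1)^n) := by
      rw [smul_eq_C_mul]
    rw [h1, _root_.map_smul]
    have h2 : ((X + 1 : ℚ[X]))^n = ∑ k ∈ range (n+1), monomial k (n.choose k : ℚ) := by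
      rw [add_pow]
      apply Finset.sum_congr rfl
      intro k hk
      rw [one_pow, ← C_eq_natCast, ← Polynomial.C_mul_X_pow_eq_monomial]
      ring
    rw [h2, map_sum]
    simp only [L_monomial]
    rw [euler_dagger n]
    simp [smul_eq_mul]
    ring

/-- normalized orthogonal polynomials: (k+2) P_{k+2} = (2X-1) P_{k+1} + (k+1) P_k -/
def P : ℕ → ℚ[X]
  | 0 => 1
  | 1 => 2 * X - 1
  | (k+2) => C ((k+2 : ℚ)⁻¹) * ((2 * X - 1) * P (k+1) + ((k:ℚ[X]) + 1) * P k)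

lemma cast_ne (k : ℕ) : ((k:ℚ[X]) + 2) ≠ 0 := by
  have : ((k:ℚ[X]) + 2) = C ((k:ℚ) + 2) := by rw [C_add, C_eq_natCast, map_ofNat]
  rw [this]
  simp only [ne_eq, C_eq_zero]
  positivity

lemma P_rec (k : ℕ) : ((k:ℚ[X]) + 2) * P (k+2) = (2 * X - 1) * P (k+1) + ((k:ℚ[X]) + 1) * P k := by
  have hC : ((k:ℚ[X]) + 2) = C ((k:ℚ) + 2) := by rw [C_add, C_eq_natCast, map_ofNat]
  rw [P, hC, ← mul_assoc, ← C_mul, mul_inv_cancel₀ (by positivity : ((k:ℚ)+2) ≠ 0), C_1, one_mul]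

lemma P_eval_one (k : ℕ) : (P k).eval 1 = 1 := by
  induction k using Nat.strong_induction_on with
  | _ k ih =>
    match k with
    | 0 => simp [P]
    | 1 => norm_num [P]
    | (k+2) =>
      have h := congrArg (Polynomial.eval (1:ℚ)) (P_rec k)
      simp only [eval_mul, eval_add, eval_sub, eval_one, eval_X, eval_natCast, eval_ofNat] at h
      rw [ih (k+1) (by omega), ih k (by omega)] at h
      have h2 : (k+2:ℚ) ≠ 0 := by positivity
      have : (k+2:ℚ) * (P (k+2)).eval 1 = (k+2:ℚ) * 1 := by rw [h]; ring
      exact mul_left_cancel₀ h2 this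

/-- partial sums of P -/
def Ps (k : ℕ) : ℚ[X] := ∑ m ∈ range k, P m

lemma Ps_succ (k : ℕ) : Ps (k+1) = Ps k + P k := Finset.sum_range_succ _ _

/-- auxiliary identity D -/
lemma P_aux (k : ℕ) : (2 * X - 1) * Ps (k+1) + ((k:ℚ[X]) + 1) * Ps k
    = (k:ℚ[X]) * Ps (k+1) + ((k:ℚ[X]) + 1) * P (k+1) := by
  induction k with
  | zero =>
    simp [Ps, P, Finset.sum_range_succ]
  | succ k ih =>
    have hrec := P_rec k
    push_cast
    rw [Ps_succ (k+1)]
    calc (2 * X - 1) * (Ps (k + 1) + P (k+1)) + ((k:ℚ[X]) + 1 + 1) * Ps (k+1)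
        = ((2 * X - 1) * Ps (k + 1) + ((k:ℚ[X])+1) * Ps k) + ((2 * X - 1) * P (k+1) + ((k:ℚ[X])+1) * P k)
          + (((k:ℚ[X]) + 2) * Ps (k+1) - ((k:ℚ[X])+1) * Ps k - ((k:ℚ[X])+1) * P k) := by
          ring
      _ = ((k:ℚ[X]) * Ps (k+1) + ((k:ℚ[X])+1) * P (k+1)) + (((k:ℚ[X])+2) * P (k+2))
          + (((k:ℚ[X]) + 2) * Ps (k+1) - ((k:ℚ[X])+1) * Ps k - ((k:ℚ[X])+1) * P k) := by
          rw [ih, ← hrec]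
      _ = _ := by
          rw [Ps_succ k]
          ring

/-- connection lemma: P_k(X+1) = P_k + 2 * (P_0 + ... + P_{k-1}) -/
lemma P_conn (k : ℕ) : (P k).comp (X + 1) = P k + 2 * Ps k := by
  induction k using Nat.strong_induction_on with
  | _ k ih =>
    match k with
    | 0 => simp [P, Ps]
    | 1 =>
      simp only [P, Ps, range_one, sum_singleton]
      simp [sub_comp, mul_comp, X_comp, one_comp, ofNat_comp]
      ring
    | (k+2) =>
      have h := congrArg (fun p => Polynomial.comp p (X + 1 : ℚ[X])) (P_rec k)
      simp only [mul_comp, add_comp, sub_comp, X_comp, one_comp, natCast_comp, ofNat_comp,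
        Nat.cast_ofNat] at h
      rw [ih (k+1) (by omega), ih k (by omega)] at h
      have key : (2 * (X+1 : ℚ[X]) - 1) * (P (k+1) + 2 * Ps (k+1)) + ((k:ℚ[X])+1) * (P k + 2 * Ps k)
          = ((k:ℚ[X])+2) * (P (k+2) + 2 * Ps (k+2)) := by
        have hrec := P_rec k
        have haux := P_aux k
        calc (2 * (X+1 : ℚ[X]) - 1) * (P (k+1) + 2 * Ps (k+1)) + ((k:ℚ[X])+1) * (P k + 2 * Ps k)
            = ((2 * X - 1) * P (k+1) + ((k:ℚ[X])+1) * P k)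
              + 2 * ((2 * X - 1) * Ps (k+1) + ((k:ℚ[X])+1) * Ps k)
              + 2 * P (k+1) + 4 * Ps (k+1) := by ring
          _ = ((k:ℚ[X])+2) * P (k+2) + 2 * ((k:ℚ[X]) * Ps (k+1) + ((k:ℚ[X])+1) * P (k+1))
              + 2 * P (k+1) + 4 * Ps (k+1) := by rw [← hrec, ← haux]
          _ = ((k:ℚ[X])+2) * (P (k+2) + 2 * (Ps (k+1) + P (k+1))) := by ring
          _ = _ := by rw [Ps_succ (k+1)]
      rw [key] at h
      exact mul_left_cancel₀ (cast_ne k) h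

/-- THE core lemma: L kills all P_k, k ≥ 1 -/
lemma L_P (k : ℕ) : L (P k) = if k = 0 then 1 else 0 := by
  induction k using Nat.strong_induction_on with
  | _ k ih =>
    match k with
    | 0 =>
      have : e 0 = 1 := by
        have := eulerEval_def 1 0; simpa using this
      simp [P, this]
    | (j+1) =>
      have hs := L_shift (P (j+1))
      rw [P_conn (j+1), P_eval_one] at hs
      have hPs : L (Ps (j+1)) = 1 := by
        rw [Ps, map_sum]
        rw [Finset.sum_eq_single 0]
        · rw [ih 0 (by omega)]; simp
        · intro m hm hm0
          rw [ih m (by simp at hm; omega)]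
          simp [hm0]
        · simp
      have h2 : (2 : ℚ[X]) * Ps (j+1) = (2:ℚ) • Ps (j+1) := by
        rw [smul_eq_C_mul, map_ofNat]
      rw [map_add, h2, _root_.map_smul, hPs] at hs
      simp only [if_neg (Nat.succ_ne_zero j)]
      simp only [smul_eq_mul, mul_one] at hs
      linarith [hs]

/-- three-term recurrence in multiplied-by-2 form -/
lemma XP (k : ℕ) : (2:ℚ[X]) * (X * P k)
    = ((k:ℚ[X]) + 1) * P (k+1) + P k - (k:ℚ[X]) * P (k-1) := by
  match k with
  | 0 =>
    show (2:ℚ[X]) * (X * P 0) = (((0:ℕ):ℚ[X]) + 1) * P 1 + P 0 - ((0:ℕ):ℚ[X]) * P 0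
    rw [show P 0 = 1 from rfl, show P 1 = 2 * X - 1 from rfl]
    push_cast
    ring
  | (j+1) =>
    have hrec := P_rec j
    push_cast
    linear_combination -hrec

/-- mixed moments -/
def T (j k : ℕ) : ℚ := L (X ^ j * P k)

lemma T_zero (k : ℕ) : T 0 k = if k = 0 then 1 else 0 := by
  rw [T, pow_zero, one_mul, L_P]

lemma T_left (j : ℕ) : T j 0 = e j := by
  rw [T, show P 0 = 1 from rfl, mul_one, L_X_pow]

lemma natmul (k : ℕ) (p : ℚ[X]) : (k:ℚ[X]) * p = (k:ℚ) • p := by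
  rw [smul_eq_C_mul, C_eq_natCast]

lemma T_rec (j k : ℕ) :
    2 * T (j+1) k = ((k:ℚ) + 1) * T j (k+1) + T j k - (k:ℚ) * T j (k-1) := by
  have h : (2:ℚ[X]) * (X ^ (j+1) * P k)
      = ((k:ℚ[X]) + 1) * (X ^ j * P (k+1)) + X ^ j * P k - (k:ℚ[X]) * (X ^ j * P (k-1)) := by
    have := XP k
    calc (2:ℚ[X]) * (X ^ (j+1) * P k) = X ^ j * ((2:ℚ[X]) * (X * P k)) := by ring
      _ = X ^ j * (((k:ℚ[X]) + 1) * P (k+1) + P k - (k:ℚ[X]) * P (k-1)) := by rw [this]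
      _ = _ := by ring
  have h2 : (2:ℚ[X]) * (X ^ (j+1) * P k) = (2:ℚ) • (X ^ (j+1) * P k) := by
    rw [smul_eq_C_mul, map_ofNat]
  have h3 : ((k:ℚ[X]) + 1) * (X ^ j * P (k+1)) = (((k:ℚ)+1)) • (X ^ j * P (k+1)) := by
    rw [smul_eq_C_mul, C_add, C_eq_natCast, C_1]
  rw [h2, h3, natmul] at h
  have := congrArg L h
  simp only [_root_.map_smul, map_add, map_sub, smul_eq_mul] at this
  rw [T, T, T, T]
  linarith [this]

lemma T_vanish : ∀ j k, j < k → T j k = 0 := by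
  intro j
  induction j with
  | zero =>
    intro k hk
    rw [T_zero, if_neg (by omega)]
  | succ j ih =>
    intro k hk
    have h := T_rec j k
    rw [ih (k+1) (by omega), ih k (by omega), ih (k-1) (by omega)] at h
    linarith [h]

lemma T_diag (k : ℕ) : T k k = (-1)^k * (k.factorial : ℚ) / 2^k := by
  induction k with
  | zero => simp [T_zero, Nat.factorial]
  | succ k ih =>
    have h := T_rec k (k+1)
    rw [T_vanish k (k+2) (by omega), T_vanish k (k+1) (by omega),
      show k+1-1 = k from rfl] at h
    have hT : T (k+1) (k+1) = -(((k:ℚ)+1)/2) * T k k := by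
      push_cast at h
      linarith [h]
    rw [hT, ih, Nat.factorial_succ]
    push_cast
    have hne : (2:ℚ)^k ≠ 0 := by positivity
    field_simp
    ring

/-- the bilinear sum -/
def G (i j : ℕ) : ℚ := ∑ k ∈ range (i+1), (-1)^k * T i k * T j k

lemma G_zero (j : ℕ) : G 0 j = e j := by
  simp [G, T_zero, T_left]

lemma G_step (i j : ℕ) : G (i+1) j = G i (j+1) := by
  have key : ∀ k : ℕ, 2 * ((-1:ℚ)^k * T (i+1) k * T j k)
      = (-1:ℚ)^k * (((k:ℚ)+1) * T i (k+1)) * T j k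
        + (-1:ℚ)^k * T i k * T j k
        - (-1:ℚ)^k * ((k:ℚ) * T i (k-1)) * T j k := by
    intro k; linear_combination ((-1:ℚ)^k * T j k) * (T_rec i k)
  have key2 : ∀ k : ℕ, 2 * ((-1:ℚ)^k * T i k * T (j+1) k)
      = (-1:ℚ)^k * T i k * (((k:ℚ)+1) * T j (k+1))
        + (-1:ℚ)^k * T i k * T j k
        - (-1:ℚ)^k * T i k * ((k:ℚ) * T j (k-1)) := by
    intro k; linear_combination ((-1:ℚ)^k * T i k) * (T_rec j k)
  have expand1 : 2 * G (i+1) j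
      = (∑ k ∈ range (i+2), (-1:ℚ)^k * (((k:ℚ)+1) * T i (k+1)) * T j k)
        + (∑ k ∈ range (i+2), (-1:ℚ)^k * T i k * T j k)
        - (∑ k ∈ range (i+2), (-1:ℚ)^k * ((k:ℚ) * T i (k-1)) * T j k) := by
    rw [G, Finset.mul_sum, ← Finset.sum_add_distrib, ← Finset.sum_sub_distrib]
    exact Finset.sum_congr rfl fun k _ => key k
  have expand2 : 2 * G i (j+1)
      = (∑ k ∈ range (i+1), (-1:ℚ)^k * T i k * (((k:ℚ)+1) * T j (k+1)))
        + (∑ k ∈ range (i+1), (-1:ℚ)^k * T i k * T j k)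
        - (∑ k ∈ range (i+1), (-1:ℚ)^k * T i k * ((k:ℚ) * T j (k-1))) := by
    rw [G, Finset.mul_sum, ← Finset.sum_add_distrib, ← Finset.sum_sub_distrib]
    exact Finset.sum_congr rfl fun k _ => key2 k
  have eqA : (∑ k ∈ range (i+2), (-1:ℚ)^k * (((k:ℚ)+1) * T i (k+1)) * T j k)
      = - ∑ k ∈ range (i+1), (-1:ℚ)^k * T i k * ((k:ℚ) * T j (k-1)) := by
    have hL : (∑ k ∈ range (i+2), (-1:ℚ)^k * (((k:ℚ)+1) * T i (k+1)) * T j k)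
        = ∑ k ∈ range i, (-1:ℚ)^k * (((k:ℚ)+1) * T i (k+1)) * T j k := by
      rw [Finset.sum_range_succ, Finset.sum_range_succ,
        T_vanish i (i+2) (by omega), T_vanish i (i+1) (by omega)]
      ring
    have hR : (∑ k ∈ range (i+1), (-1:ℚ)^k * T i k * ((k:ℚ) * T j (k-1)))
        = ∑ k ∈ range i, (-1:ℚ)^(k+1) * T i (k+1) * (((k+1:ℕ):ℚ) * T j (k+1-1)) := by
      rw [Finset.sum_range_succ' (fun k => (-1:ℚ)^k * T i k * ((k:ℚ) * T j (k-1))) i]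
      norm_num
    rw [hL, hR, ← Finset.sum_neg_distrib]
    refine Finset.sum_congr rfl fun k _ => ?_
    rw [Nat.add_sub_cancel]
    push_cast
    ring
  have eqB : (∑ k ∈ range (i+2), (-1:ℚ)^k * ((k:ℚ) * T i (k-1)) * T j k)
      = - ∑ k ∈ range (i+1), (-1:ℚ)^k * T i k * (((k:ℚ)+1) * T j (k+1)) := by
    have hL : (∑ k ∈ range (i+2), (-1:ℚ)^k * ((k:ℚ) * T i (k-1)) * T j k)
        = ∑ k ∈ range (i+1), (-1:ℚ)^(k+1) * (((k+1:ℕ):ℚ) * T i (k+1-1)) * T j (k+1) := by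
      rw [Finset.sum_range_succ' (fun k => (-1:ℚ)^k * ((k:ℚ) * T i (k-1)) * T j k) (i+1)]
      norm_num
    rw [hL, ← Finset.sum_neg_distrib]
    refine Finset.sum_congr rfl fun k _ => ?_
    rw [Nat.add_sub_cancel]
    push_cast
    ring
  have eqC : (∑ k ∈ range (i+2), (-1:ℚ)^k * T i k * T j k)
      = ∑ k ∈ range (i+1), (-1:ℚ)^k * T i k * T j k := by
    rw [Finset.sum_range_succ, T_vanish i (i+1) (by omega)]
    ring
  have : 2 * G (i+1) j = 2 * G i (j+1) := by
    rw [expand1, expand2, eqA, eqB, eqC]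
    ring
  linarith [this]

lemma G_eq (i j : ℕ) : G i j = e (i+j) := by
  induction i generalizing j with
  | zero => rw [G_zero, Nat.zero_add]
  | succ i ih => rw [G_step, ih (j+1)]; congr 1; omega

lemma aux_prod (m : ℕ) : ∏ l ∈ Finset.Icc 1 m, ((l:ℚ)^2/4) = (m.factorial : ℚ)^2 / 4^m := by
  induction m with
  | zero => simp [Nat.factorial]
  | succ m ih =>
    rw [Finset.prod_Icc_succ_top (by omega), ih, Nat.factorial_succ]
    push_cast
    have h4 : (4:ℚ)^(m+1) = 4 * 4^m := by ring
    rw [h4]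
    field_simp

lemma prod_fact (n : ℕ) : ∏ k ∈ range (n+1), ((k.factorial:ℚ))^2/4^k
    = ∏ l ∈ Finset.Icc 1 n, ((l:ℚ)^2/4)^(n+1-l) := by
  induction n with
  | zero => simp [Nat.factorial]
  | succ n ih =>
    have step1 : ∏ l ∈ Finset.Icc 1 (n+1), ((l:ℚ)^2/4)^(n+1+1-l)
        = (∏ l ∈ Finset.Icc 1 (n+1), ((l:ℚ)^2/4)^(n+1-l))
          * ∏ l ∈ Finset.Icc 1 (n+1), ((l:ℚ)^2/4) := by
      rw [← Finset.prod_mul_distrib]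
      refine Finset.prod_congr rfl fun l hl => ?_
      have hl' : l ≤ n+1 := (Finset.mem_Icc.mp hl).2
      rw [← pow_succ]
      congr 1
      omega
    have step2 : ∏ l ∈ Finset.Icc 1 (n+1), ((l:ℚ)^2/4)^(n+1-l)
        = ∏ l ∈ Finset.Icc 1 n, ((l:ℚ)^2/4)^(n+1-l) := by
      rw [Finset.prod_Icc_succ_top (by omega)]
      simp
    rw [Finset.prod_range_succ, ih, step1, step2, aux_prod (n+1)]

theorem hankel_eulerEval_one (n : ℕ) :
    hankel (fun k => eulerEval 1 k) n
      = (-1) ^ (n * (n + 1) / 2)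
      * ∏ ℓ ∈ Finset.Icc 1 n, ((ℓ : ℚ) ^ 2 / 4) ^ (n + 1 - ℓ) := by
  set A : Matrix (Fin (n+1)) (Fin (n+1)) ℚ := Matrix.of fun i k => T i.1 k.1 with hA
  set D : Matrix (Fin (n+1)) (Fin (n+1)) ℚ :=
    Matrix.diagonal (fun k : Fin (n+1) => (-1:ℚ)^(k.1)) with hD
  have factor : (Matrix.of fun i j : Fin (n+1) => e (i.1 + j.1)) = A * D * Aᵀ := by
    ext i j
    rw [Matrix.mul_apply]
    simp only [Matrix.mul_diagonal, Matrix.transpose_apply, hA, hD, Matrix.of_apply]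
    have : ∑ k : Fin (n+1), T i.1 k.1 * (-1:ℚ)^(k.1) * T j.1 k.1
        = ∑ k ∈ range (n+1), (-1:ℚ)^k * T i.1 k * T j.1 k := by
      rw [← Fin.sum_univ_eq_sum_range (fun k => (-1:ℚ)^k * T i.1 k * T j.1 k) (n+1)]
      exact Finset.sum_congr rfl fun k _ => by ring
    rw [this]
    have hsub : range (i.1+1) ⊆ range (n+1) := by
      intro x hx; simp at hx ⊢; omega
    have hext : ∑ k ∈ range (n+1), (-1:ℚ)^k * T i.1 k * T j.1 k
        = ∑ k ∈ range (i.1+1), (-1:ℚ)^k * T i.1 k * T j.1 k := by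
      rw [Finset.sum_subset hsub]
      intro x hx hnx
      simp only [Finset.mem_range] at hx hnx
      rw [T_vanish i.1 x (by omega)]
      ring
    rw [hext]
    exact (G_eq i.1 j.1).symm
  have hlow : A.BlockTriangular OrderDual.toDual := by
    intro i j hij
    exact T_vanish i.1 j.1 hij
  have detA : A.det = ∏ k : Fin (n+1), T k.1 k.1 := Matrix.det_of_lowerTriangular A hlow
  have detD : D.det = (-1:ℚ)^(n*(n+1)/2) := by
    rw [hD, Matrix.det_diagonal, Finset.prod_pow_eq_pow_sum]
    congr 1
    rw [Fin.sum_univ_eq_sum_range (fun k => k) (n+1), Finset.sum_range_id]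
    rw [Nat.add_sub_cancel, Nat.mul_comm]
  have : hankel (fun k => eulerEval 1 k) n = A.det * D.det * A.det := by
    rw [hankel]
    show (Matrix.of fun i j : Fin (n+1) => e (i.1 + j.1)).det = _
    rw [factor, Matrix.det_mul, Matrix.det_mul, Matrix.det_transpose]
  rw [this, detA, detD]
  have hprodsq : (∏ k : Fin (n+1), T k.1 k.1) * (∏ k : Fin (n+1), T k.1 k.1)
      = ∏ k ∈ range (n+1), ((k.factorial:ℚ))^2/4^k := by
    rw [← Fin.prod_univ_eq_prod_range (fun k => ((k.factorial:ℚ))^2/4^k) (n+1)]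
    rw [← Finset.prod_mul_distrib]
    refine Finset.prod_congr rfl fun k _ => ?_
    rw [T_diag, div_mul_div_comm]
    have hs : ((-1:ℚ))^(k.1) * (-1:ℚ)^(k.1) = 1 := by
      rw [← pow_add]
      exact Even.neg_one_pow ⟨k.1, rfl⟩
    congr 1
    · linear_combination ((k.1.factorial:ℚ))^2 * hs
    · rw [← mul_pow]; norm_num
  calc (∏ k : Fin (n+1), T k.1 k.1) * (-1:ℚ)^(n*(n+1)/2) * (∏ k : Fin (n+1), T k.1 k.1)
      = (-1:ℚ)^(n*(n+1)/2) * ((∏ k : Fin (n+1), T k.1 k.1) * (∏ k : Fin (n+1), T k.1 k.1)) := by ring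
    _ = _ := by rw [hprodsq, prod_fact]

end
end
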